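/- arXiv:2202.07381 — 2 statements merged into one kernel-verified Lean document; each statement's English description precedes it below -/
import Mathlib

section
/- If M is symmetric positive definite, K is symmetric positive semidefinite, and all eigenvalues of the matrix A ∈ ℝ^{r×r} have positive real part, then for every Δt > 0 the matrix I_r ⊗ M + Δt A ⊗ K is invertible. -/
open Matrix Kronecker


theorem aux_det_one_add_smul_ne (r : ℕ) (A : Matrix (Fin r) (Fin r) ℝ)
    (hA : ∀ μ ∈ spectrum ℂ (A.map (Complex.ofReal)), 0 < μ.re)
    (c : ℝ) (hc : 0 ≤ c) : IsUnit (1 + c • A).det := by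
  rcases hc.eq_or_lt with h | h
  · simp [← h]
  · rw [isUnit_iff_ne_zero]
    intro hdet
    set B := A.map (Complex.ofReal) with hB
    have h1 : ((1 + c • A).map (Complex.ofRealHom)).det = 0 := by
      rw [← RingHom.mapMatrix_apply, ← RingHom.map_det, hdet, map_zero]
    have h2 : (1 + c • A).map (Complex.ofRealHom) = 1 + (c : ℂ) • B := by
      ext i j
      simp [Matrix.one_apply, apply_ite, hB]
    have hmem : (-(c⁻¹) : ℂ) ∈ spectrum ℂ B := by
      rw [spectrum.mem_iff]
      intro hu
      rw [Matrix.isUnit_iff_isUnit_det] at hu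
      have he : algebraMap ℂ (Matrix (Fin r) (Fin r) ℂ) (-(c⁻¹)) - B
          = (-(c⁻¹) : ℂ) • (1 + (c : ℂ) • B) := by
        rw [smul_add, smul_smul, Algebra.algebraMap_eq_smul_one]
        have hcc : (-(c⁻¹) : ℂ) * c = -1 := by
          rw [neg_mul, ← Complex.ofReal_mul, inv_mul_cancel₀ h.ne', Complex.ofReal_one]
        rw [hcc, neg_one_smul, sub_eq_add_neg]
      rw [he, det_smul, ← h2, h1, mul_zero] at hu
      exact hu.ne_zero rfl
    have h3 := hA _ hmem
    have h4 : (-(↑c⁻¹ : ℂ)).re = -c⁻¹ := by simp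
    rw [h4] at h3
    have : (0:ℝ) < c⁻¹ := by positivity
    linarith

/-- if `M` is SPD, `K` symmetric PSD, and every (complex) eigenvalue of
`A` has positive real part, then `I_r ⊗ M + Δt A ⊗ K` is invertible for every `Δt > 0`. -/
theorem irk_velocity_block_invertible
    (n r : ℕ) (M K : Matrix (Fin n) (Fin n) ℝ)
    (hM : M.PosDef) (hK : K.PosSemidef)
    (A : Matrix (Fin r) (Fin r) ℝ)
    (hA : ∀ μ ∈ spectrum ℂ (A.map (Complex.ofReal)), 0 < μ.re) :
    ∀ Δt : ℝ, 0 < Δt →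
      IsUnit ((1 : Matrix (Fin r) (Fin r) ℝ) ⊗ₖ M + (Δt • A) ⊗ₖ K).det := by
  intro Δt hΔt
  -- square root of M
  open scoped MatrixOrder in
  set C := CFC.sqrt M with hCdef
  have hCherm : C.IsHermitian := by
    open scoped MatrixOrder in
    exact (Matrix.nonneg_iff_posSemidef.mp (CFC.sqrt_nonneg M)).1
  have hC2 : C * C = M := by
    open scoped MatrixOrder in
    exact CFC.sqrt_mul_sqrt_self M (Matrix.nonneg_iff_posSemidef.mpr hM.posSemidef)
  have hCdet : IsUnit C.det := by
    rw [isUnit_iff_ne_zero]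
    intro h0
    have : M.det = 0 := by rw [← hC2, det_mul, h0, mul_zero]
    exact hM.det_pos.ne' this
  have hCC : C * C⁻¹ = 1 := mul_nonsing_inv C hCdet
  have hCC' : C⁻¹ * C = 1 := nonsing_inv_mul C hCdet
  -- S := C⁻¹ K C⁻¹, symmetric PSD
  set S := C⁻¹ * K * C⁻¹ with hSdef
  have hS : S.PosSemidef := by
    have := hK.conjTranspose_mul_mul_same C⁻¹
    rwa [hCherm.inv.eq] at this
  set U := (hS.1.eigenvectorUnitary : Matrix (Fin n) (Fin n) ℝ) with hUdef
  set d := hS.1.eigenvalues with hddef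
  have hdpos : ∀ k, 0 ≤ d k := hS.eigenvalues_nonneg
  set D : Matrix (Fin n) (Fin n) ℝ := diagonal (RCLike.ofReal ∘ d) with hDdef
  have hspec : S = U * D * star U := hS.1.spectral_theorem
  have hUU : U * star U = 1 := Matrix.mem_unitaryGroup_iff.mp hS.1.eigenvectorUnitary.2
  have hUU' : star U * U = 1 := Matrix.mem_unitaryGroup_iff'.mp hS.1.eigenvectorUnitary.2
  set Q := C * U with hQdef
  have hQdet : IsUnit Q.det := by
    rw [hQdef, det_mul]
    refine hCdet.mul ?_
    rw [isUnit_iff_ne_zero]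
    intro h0
    have : (U * star U).det = 0 := by rw [det_mul, h0, zero_mul]
    rw [hUU, det_one] at this
    exact one_ne_zero this
  have hQTdet : IsUnit (star U * Cᴴ).det := by
    rw [det_mul]
    refine (isUnit_iff_ne_zero.mpr ?_).mul (by rwa [hCherm.eq])
    intro h0
    have : (U * star U).det = 0 := by rw [det_mul, mul_comm, h0, zero_mul]
    rw [hUU, det_one] at this
    exact one_ne_zero this
  have hMQ : M = Q * (star U * Cᴴ) := by
    rw [hQdef, hCherm.eq, mul_assoc, ← mul_assoc U, hUU, one_mul, hC2]
  have hKQ : K = Q * D * (star U * Cᴴ) := by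
    have h1 : C * S * C = K := by
      rw [hSdef, ← mul_assoc, ← mul_assoc, hCC, one_mul, mul_assoc, hCC', mul_one]
    calc K = C * S * C := h1.symm
      _ = C * (U * D * star U) * C := by rw [← hspec]
      _ = Q * D * (star U * Cᴴ) := by
          rw [hQdef, hCherm.eq]; simp only [Matrix.mul_assoc]
  -- factor the big matrix
  have hfact : (1 : Matrix (Fin r) (Fin r) ℝ) ⊗ₖ M + (Δt • A) ⊗ₖ K
      = (1 ⊗ₖ Q) * ((1 : Matrix (Fin r × Fin n) (Fin r × Fin n) ℝ) + (Δt • A) ⊗ₖ D)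
        * (1 ⊗ₖ (star U * Cᴴ)) := by
    symm
    rw [Matrix.mul_add, Matrix.add_mul, Matrix.mul_one,
      ← mul_kronecker_mul, ← mul_kronecker_mul, ← mul_kronecker_mul,
      Matrix.one_mul, Matrix.one_mul, Matrix.mul_one, ← hMQ, ← hKQ]
  rw [hfact, det_mul, det_mul]
  refine ((?_ : IsUnit _).mul ?_).mul ?_
  · rw [det_kronecker, det_one, one_pow, one_mul]
    exact hQdet.pow _
  · -- middle block: block diagonal
    have hmid : (1 : Matrix (Fin r × Fin n) (Fin r × Fin n) ℝ) + (Δt • A) ⊗ₖ D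
        = blockDiagonal (fun k => (1 : Matrix (Fin r) (Fin r) ℝ) + (Δt * d k) • A) := by
      ext ⟨i, k⟩ ⟨j, l⟩
      simp only [Matrix.add_apply, Matrix.one_apply, kroneckerMap_apply, blockDiagonal_apply,
        hDdef, diagonal_apply, Matrix.smul_apply, smul_eq_mul, Prod.mk.injEq,
        RCLike.ofReal_real_eq_id, Function.comp_apply, id_eq]
      by_cases hkl : k = l <;> by_cases hij : i = j <;>
        simp [hkl, hij] <;> ring
    rw [hmid, det_blockDiagonal]
    rw [isUnit_iff_ne_zero]
    refine Finset.prod_ne_zero_iff.mpr fun k _ => ?_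
    exact (aux_det_one_add_smul_ne r A hA (Δt * d k) (mul_nonneg hΔt.le (hdpos k))).ne_zero
  · rw [det_kronecker, det_one, one_pow, one_mul]
    exact hQTdet.pow _
end

section
/- Let J ∈ ℝ^{N×N} be symmetric positive definite and let R_1,...,R_m be restriction matrices (each R_i consisting of distinct rows of the identity) such that every index 1..N appears in at least one R_i. Then the additive Schwarz preconditioner P = Σ_i R_i^T (R_i J R_i^T)^{-1} R_i is symmetric positive definite. -/
open Matrix

/-- The row-selection ("restriction") matrix whose rows are the rows `ι a` of the
identity matrix. -/
def selMatrix {k N : ℕ} (ι : Fin k → Fin N) : Matrix (Fin k) (Fin N) ℝ :=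
  Matrix.of fun a b => if ι a = b then 1 else 0

lemma selMatrix_conjTranspose {k N : ℕ} (ι : Fin k → Fin N) :
    (selMatrix ι)ᴴ = (selMatrix ι)ᵀ := by
  ext a b; simp [selMatrix, apply_ite]

lemma selMatrix_mulVec {k N : ℕ} (ι : Fin k → Fin N) (x : Fin N → ℝ) (a : Fin k) :
    (selMatrix ι *ᵥ x) a = x (ι a) := by
  simp [selMatrix, mulVec, dotProduct, ite_mul]

lemma selMatrix_transpose_mulVec {k N : ℕ} (ι : Fin k → Fin N)
    (hinj : Function.Injective ι) (y : Fin k → ℝ) (a : Fin k) :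
    ((selMatrix ι)ᵀ *ᵥ y) (ι a) = y a := by
  simp only [selMatrix, mulVec, dotProduct, transpose_apply, of_apply, ite_mul, one_mul,
    zero_mul]
  rw [Finset.sum_eq_single a (fun b _ hb => by simp [hinj.ne hb]) (by simp)]
  simp

lemma selMatrix_sandwich_posDef {k N : ℕ} (ι : Fin k → Fin N)
    (hinj : Function.Injective ι) {J : Matrix (Fin N) (Fin N) ℝ} (hJ : J.PosDef) :
    (selMatrix ι * J * (selMatrix ι)ᵀ).PosDef := by
  have hB : ((selMatrix ι)ᵀ)ᴴ = selMatrix ι := by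
    rw [← selMatrix_conjTranspose, conjTranspose_conjTranspose]
  refine Matrix.PosDef.of_dotProduct_mulVec_pos ?_ ?_
  · have := isHermitian_conjTranspose_mul_mul ((selMatrix ι)ᵀ) hJ.1
    rwa [hB] at this
  · intro y hy
    have h1 : star y ⬝ᵥ (selMatrix ι * J * (selMatrix ι)ᵀ) *ᵥ y
        = star ((selMatrix ι)ᵀ *ᵥ y) ⬝ᵥ J *ᵥ ((selMatrix ι)ᵀ *ᵥ y) := by
      simp only [star_mulVec, hB, dotProduct_mulVec, vecMul_vecMul, Matrix.mul_assoc]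
    rw [h1]
    refine hJ.dotProduct_mulVec_pos ?_
    intro h0
    apply hy
    funext a
    have := congrFun h0 (ι a)
    rwa [selMatrix_transpose_mulVec ι hinj] at this

lemma sum_mulVec_aux {α : Type*} (s : Finset α) {p q : ℕ}
    (M : α → Matrix (Fin p) (Fin q) ℝ) (x : Fin q → ℝ) :
    (∑ i ∈ s, M i) *ᵥ x = ∑ i ∈ s, M i *ᵥ x := by
  induction s using Finset.cons_induction with
  | empty => simp
  | cons a s h ih => simp [Finset.sum_cons, Matrix.add_mulVec, ih]

lemma dotProduct_sum_aux {α : Type*} (s : Finset α) {p : ℕ}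
    (v : Fin p → ℝ) (f : α → Fin p → ℝ) :
    v ⬝ᵥ ∑ i ∈ s, f i = ∑ i ∈ s, v ⬝ᵥ f i := by
  induction s using Finset.cons_induction with
  | empty => simp
  | cons a s h ih => simp [Finset.sum_cons, dotProduct_add, ih]

/-- for `J` SPD and restriction matrices `R_i` (distinct rows of the
identity) whose index sets cover `{1,…,N}`, the additive Schwarz preconditioner
`P = ∑ᵢ Rᵢᵀ (Rᵢ J Rᵢᵀ)⁻¹ Rᵢ` is symmetric positive definite. -/
theorem additiveSchwarz_posDef
    (N m : ℕ) (J : Matrix (Fin N) (Fin N) ℝ) (hJ : J.PosDef)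
    (n : Fin m → ℕ) (ι : ∀ i, Fin (n i) → Fin N)
    (hinj : ∀ i, Function.Injective (ι i))
    (hcover : ∀ j : Fin N, ∃ i a, ι i a = j) :
    (∑ i, (selMatrix (ι i))ᵀ * (selMatrix (ι i) * J * (selMatrix (ι i))ᵀ)⁻¹ *
        selMatrix (ι i)).PosDef := by
  have hA : ∀ i, ((selMatrix (ι i) * J * (selMatrix (ι i))ᵀ)⁻¹).PosDef :=
    fun i => (selMatrix_sandwich_posDef (ι i) (hinj i) hJ).inv
  have hterm : ∀ i, ((selMatrix (ι i))ᵀ * (selMatrix (ι i) * J * (selMatrix (ι i))ᵀ)⁻¹ *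
      selMatrix (ι i)).PosSemidef := by
    intro i
    have := (hA i).posSemidef.conjTranspose_mul_mul_same (selMatrix (ι i))
    rwa [selMatrix_conjTranspose] at this
  have hquad : ∀ (x : Fin N → ℝ),
      star x ⬝ᵥ (∑ i, (selMatrix (ι i))ᵀ * (selMatrix (ι i) * J * (selMatrix (ι i))ᵀ)⁻¹ *
        selMatrix (ι i)) *ᵥ x
      = ∑ i, star x ⬝ᵥ ((selMatrix (ι i))ᵀ * (selMatrix (ι i) * J * (selMatrix (ι i))ᵀ)⁻¹ *
        selMatrix (ι i)) *ᵥ x := by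
    intro x
    rw [sum_mulVec_aux, dotProduct_sum_aux]
  refine Matrix.PosDef.of_dotProduct_mulVec_pos ?_ ?_
  · rw [Matrix.IsHermitian, conjTranspose_sum]
    exact Finset.sum_congr rfl fun i _ => (hterm i).1
  · intro x hx
    rw [hquad]
    obtain ⟨j, hj⟩ := Function.ne_iff.mp hx
    obtain ⟨i₀, a₀, ha₀⟩ := hcover j
    refine Finset.sum_pos' (fun i _ => (hterm i).dotProduct_mulVec_nonneg x) ⟨i₀, Finset.mem_univ _, ?_⟩
    have hq : star x ⬝ᵥ ((selMatrix (ι i₀))ᵀ * (selMatrix (ι i₀) * J * (selMatrix (ι i₀))ᵀ)⁻¹ *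
        selMatrix (ι i₀)) *ᵥ x
        = star (selMatrix (ι i₀) *ᵥ x) ⬝ᵥ
          ((selMatrix (ι i₀) * J * (selMatrix (ι i₀))ᵀ)⁻¹ *ᵥ (selMatrix (ι i₀) *ᵥ x)) := by
      simp only [star_mulVec, selMatrix_conjTranspose, dotProduct_mulVec, vecMul_vecMul,
        Matrix.mul_assoc]
    rw [hq]
    refine (hA i₀).dotProduct_mulVec_pos ?_
    intro h0
    apply hj
    have := congrFun h0 a₀
    rwa [selMatrix_mulVec, ha₀, Pi.zero_apply] at this
end
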